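/- Let n ≥ 2 and p > 0, and let μ be the generalized Minkowski functional of 𝔼_{p,n}, i.e. μ(z) := inf{λ > 0 : (λ^{-1}z₁, λ^{-2}z₂, …, λ^{-n}z_n) ∈ 𝔼_{p,n}} for z ∈ ℂⁿ. Then for every z ∈ ℂⁿ, μ(z) = max{(∑_{j=1}ⁿ |w_j|^{2p})^{1/(2p)} : w ∈ ℂⁿ, π_n(w) = z}, and μ is continuous on ℂⁿ. -/

import Mathlib

open Finset

/-- The symmetrization map `π_n : ℂⁿ → ℂⁿ`, whose `k`-th component is the
`(k+1)`-st elementary symmetric polynomial of the coordinates. -/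
noncomputable def piMap (n : ℕ) (z : Fin n → ℂ) : Fin n → ℂ :=
  fun k => ∑ s ∈ Finset.powersetCard (k.1 + 1) Finset.univ, ∏ j ∈ s, z j

/-- The generalized complex ellipsoid `𝔹_{p,n} = {z : ∑ |z_j|^(2p) < 1}`. -/
noncomputable def ellipsoid (p : ℝ) (n : ℕ) : Set (Fin n → ℂ) :=
  {z | ∑ j, ‖z j‖ ^ (2 * p) < 1}

/-- The symmetrized `(p,n)`-ellipsoid `𝔼_{p,n} = π_n(𝔹_{p,n})`. -/
noncomputable def symEllipsoid (p : ℝ) (n : ℕ) : Set (Fin n → ℂ) :=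
  piMap n '' ellipsoid p n

/-- The Euclidean unit ball in `ℂⁿ`. -/
def unitBall (n : ℕ) : Set (Fin n → ℂ) :=
  {z | ∑ j, ‖z j‖ ^ 2 < 1}

/-- `f` is a proper holomorphic map from the domain `D` onto (into) the domain `G`:
it is holomorphic on `D`, maps `D` into `G`, and preimages of compact subsets of `G`
are compact. -/
def IsProperHolomorphic {n : ℕ} (f : (Fin n → ℂ) → (Fin n → ℂ))
    (D G : Set (Fin n → ℂ)) : Prop :=
  DifferentiableOn ℂ f D ∧ Set.MapsTo f D G ∧
    ∀ K : Set (Fin n → ℂ), K ⊆ G → IsCompact K → IsCompact (D ∩ f ⁻¹' K)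

/-- `φ` is an automorphism of the domain `D`: a holomorphic bijection of `D` onto
itself with holomorphic inverse. -/
def IsAutomorphismOf {n : ℕ} (φ : (Fin n → ℂ) → (Fin n → ℂ))
    (D : Set (Fin n → ℂ)) : Prop :=
  DifferentiableOn ℂ φ D ∧ Set.BijOn φ D D ∧
    ∃ ψ : (Fin n → ℂ) → (Fin n → ℂ), DifferentiableOn ℂ ψ D ∧ Set.InvOn ψ φ D D

/-- `f : ℂⁿ → ℂⁿ` is a polynomial mapping. -/
def IsPolynomialMap {n : ℕ} (f : (Fin n → ℂ) → (Fin n → ℂ)) : Prop :=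
  ∃ P : Fin n → MvPolynomial (Fin n) ℂ, ∀ z k, f z k = MvPolynomial.eval z (P k)

open Polynomial


noncomputable def Qpoly (n : ℕ) (z : Fin n → ℂ) : ℂ[X] :=
  X ^ n + ∑ k : Fin n, C ((-1 : ℂ) ^ (k.1 + 1) * z k) * X ^ (n - 1 - k.1)

lemma Qpoly_sum_degree_lt (n : ℕ) (z : Fin n → ℂ) :
    (∑ k : Fin n, C ((-1 : ℂ) ^ (k.1 + 1) * z k) * X ^ (n - 1 - k.1)).degree
      < ((n : ℕ) : WithBot ℕ) := by
  apply lt_of_le_of_lt (Polynomial.degree_sum_le _ _)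
  rw [Finset.sup_lt_iff (by exact_mod_cast WithBot.bot_lt_coe n)]
  intro k _
  refine lt_of_le_of_lt (Polynomial.degree_C_mul_X_pow_le _ _) ?_
  exact_mod_cast Nat.cast_lt.mpr (by have := k.isLt; omega : n - 1 - k.1 < n)

lemma Qpoly_monic (n : ℕ) (z : Fin n → ℂ) : (Qpoly n z).Monic :=
  Polynomial.monic_X_pow_add (Qpoly_sum_degree_lt n z)

lemma Qpoly_natDegree (n : ℕ) (z : Fin n → ℂ) : (Qpoly n z).natDegree = n := by
  have h : (Qpoly n z).degree = n := by
    rw [Qpoly, Polynomial.degree_add_eq_left_of_degree_lt]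
    · exact Polynomial.degree_X_pow n
    · rw [Polynomial.degree_X_pow]; exact Qpoly_sum_degree_lt n z
  exact Polynomial.natDegree_eq_of_degree_eq_some h

lemma Qpoly_coeff_lt (n : ℕ) (z : Fin n → ℂ) {m : ℕ} (hm : m < n) :
    (Qpoly n z).coeff m = (-1 : ℂ) ^ (n - m) * z ⟨n - 1 - m, by omega⟩ := by
  rw [Qpoly, Polynomial.coeff_add, Polynomial.coeff_X_pow, if_neg (by omega),
    Polynomial.finset_sum_coeff]
  rw [Finset.sum_eq_single (⟨n - 1 - m, by omega⟩ : Fin n)]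
  · rw [Polynomial.coeff_C_mul, Polynomial.coeff_X_pow, if_pos, mul_one]
    · have e : ((⟨n - 1 - m, by omega⟩ : Fin n) : ℕ) + 1 = n - m := by
        simp only [Fin.val_mk]; omega
      rw [e, zero_add]
    · simp only [Fin.val_mk]; omega
  · intro k _ hk
    rw [Polynomial.coeff_C_mul, Polynomial.coeff_X_pow, if_neg, mul_zero]
    intro h
    refine hk (Fin.ext ?_)
    simp only [Fin.val_mk]
    have := k.isLt
    omega
  · simp

lemma Qpoly_coeff_n (n : ℕ) (z : Fin n → ℂ) : (Qpoly n z).coeff n = 1 := by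
  rw [Qpoly, Polynomial.coeff_add, Polynomial.coeff_X_pow, if_pos rfl,
    Polynomial.finset_sum_coeff]
  rw [Finset.sum_eq_zero, add_zero]
  intro k _
  rw [Polynomial.coeff_C_mul, Polynomial.coeff_X_pow, if_neg (by have := k.isLt; omega), mul_zero]

/-- The multiset of coordinates of `w`. -/
noncomputable def rootMS {n : ℕ} (w : Fin n → ℂ) : Multiset ℂ :=
  Multiset.map w Finset.univ.val

lemma card_rootMS {n : ℕ} (w : Fin n → ℂ) : Multiset.card (rootMS w) = n := by
  simp [rootMS]

/-- The monic polynomial with root multiset `rootMS w`. -/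
noncomputable def Ppoly {n : ℕ} (w : Fin n → ℂ) : ℂ[X] :=
  ((rootMS w).map fun a => X - C a).prod

lemma Ppoly_monic {n : ℕ} (w : Fin n → ℂ) : (Ppoly w).Monic :=
  Polynomial.monic_multiset_prod_of_monic _ _ fun a _ => Polynomial.monic_X_sub_C a

lemma Ppoly_natDegree {n : ℕ} (w : Fin n → ℂ) : (Ppoly w).natDegree = n := by
  rw [Ppoly, Polynomial.natDegree_multiset_prod_of_monic]
  · simp [rootMS, Multiset.map_map, Function.comp, List.sum_ofFn]
  · intro q hq
    obtain ⟨a, -, rfl⟩ := Multiset.mem_map.mp hq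
    exact Polynomial.monic_X_sub_C a

lemma Ppoly_roots {n : ℕ} (w : Fin n → ℂ) : (Ppoly w).roots = rootMS w :=
  Polynomial.roots_multiset_prod_X_sub_C _

lemma piMap_eq_esymm {n : ℕ} (w : Fin n → ℂ) (k : Fin n) :
    piMap n w k = (rootMS w).esymm (k.1 + 1) := by
  rw [rootMS, Finset.esymm_map_val]
  rfl

lemma Ppoly_coeff {n : ℕ} (w : Fin n → ℂ) {m : ℕ} (hm : m ≤ n) :
    (Ppoly w).coeff m = (-1 : ℂ) ^ (n - m) * (rootMS w).esymm (n - m) := by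
  have := Multiset.prod_X_sub_C_coeff (rootMS w) (k := m) (by rw [card_rootMS]; exact hm)
  rw [Ppoly]
  rw [this, card_rootMS]

/-- If `piMap n w = z` then `Ppoly w = Qpoly n z`. -/
lemma Ppoly_eq_Qpoly {n : ℕ} (hn : 1 ≤ n) {w : Fin n → ℂ} {z : Fin n → ℂ}
    (h : piMap n w = z) : Ppoly w = Qpoly n z := by
  ext m
  rcases lt_trichotomy m n with hm | hm | hm
  · rw [Ppoly_coeff w hm.le, Qpoly_coeff_lt n z hm]
    have h1 : n - m = (n - 1 - m) + 1 := by omega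
    have h2 : (rootMS w).esymm (n - 1 - m + 1) = z ⟨n - 1 - m, by omega⟩ := by
      have hpe := piMap_eq_esymm w ⟨n - 1 - m, by omega⟩
      simp only [Fin.val_mk] at hpe
      rw [← hpe, h]
    rw [h1, h2]
  · subst hm
    rw [Ppoly_coeff w le_rfl, Qpoly_coeff_n, Nat.sub_self]
    simp [Multiset.esymm]
  · rw [Polynomial.coeff_eq_zero_of_natDegree_lt (by rw [Ppoly_natDegree]; exact hm),
      Polynomial.coeff_eq_zero_of_natDegree_lt (by rw [Qpoly_natDegree]; exact hm)]

/-- If `Ppoly w = Qpoly n z` then `piMap n w = z`. -/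
lemma piMap_eq_of_Ppoly_eq {n : ℕ} {w : Fin n → ℂ} {z : Fin n → ℂ}
    (h : Ppoly w = Qpoly n z) : piMap n w = z := by
  funext k
  have hk := k.isLt
  have h1 : (Ppoly w).coeff (n - 1 - k.1) = (Qpoly n z).coeff (n - 1 - k.1) := by rw [h]
  rw [Ppoly_coeff w (by omega), Qpoly_coeff_lt n z (by omega : n - 1 - k.1 < n)] at h1
  have e1 : n - (n - 1 - k.1) = k.1 + 1 := by omega
  have e2 : (⟨n - 1 - (n - 1 - k.1), by omega⟩ : Fin n) = k := Fin.ext (by simp; omega)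
  rw [e1, e2] at h1
  have := mul_left_cancel₀ (a := ((-1 : ℂ)) ^ (k.1 + 1)) (by simp) h1
  rw [piMap_eq_esymm, this]

/-- Fiber constancy: equal `piMap` values give equal coordinate multisets. -/
lemma rootMS_eq_of_piMap_eq {n : ℕ} (hn : 1 ≤ n) {w w' : Fin n → ℂ}
    (h : piMap n w = piMap n w') : rootMS w = rootMS w' := by
  have h1 : Ppoly w = Qpoly n (piMap n w') := Ppoly_eq_Qpoly hn h
  have h2 : Ppoly w' = Qpoly n (piMap n w') := Ppoly_eq_Qpoly hn rfl
  rw [← Ppoly_roots w, ← Ppoly_roots w', h1, h2]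

/-- Existence of a fiber point. -/
lemma exists_piMap_eq {n : ℕ} (hn : 1 ≤ n) (z : Fin n → ℂ) :
    ∃ w : Fin n → ℂ, piMap n w = z := by
  set M := (Qpoly n z).roots with hM
  have hcard : Multiset.card M = n := by
    rw [hM, (Polynomial.splits_iff_card_roots).mp (IsAlgClosed.splits _),
      Qpoly_natDegree]
  have hlen : M.toList.length = n := by rw [Multiset.length_toList, hcard]
  refine ⟨fun j => M.toList.get (Fin.cast hlen.symm j), ?_⟩
  have hms : rootMS (fun j => M.toList.get (Fin.cast hlen.symm j)) = M := by
    rw [rootMS]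
    have : Multiset.map (fun j : Fin n => M.toList.get (Fin.cast hlen.symm j))
        Finset.univ.val = ((List.ofFn fun j : Fin n => M.toList.get (Fin.cast hlen.symm j)) :
          Multiset ℂ) := by
      exact Fin.univ_val_map _
    rw [this]
    have h2 : (List.ofFn fun j : Fin n => M.toList.get (Fin.cast hlen.symm j)) = M.toList := by
      apply List.ext_get (by simp [hlen])
      intro i hi1 hi2
      simp [List.get_ofFn]
    rw [h2, Multiset.coe_toList]
  apply piMap_eq_of_Ppoly_eq
  have : Ppoly (fun j => M.toList.get (Fin.cast hlen.symm j)) =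
      (M.map fun a => X - C a).prod := by rw [Ppoly, hms]
  rw [this]
  have := Polynomial.C_leadingCoeff_mul_prod_multiset_X_sub_C
    (p := Qpoly n z) (by rw [hcard, Qpoly_natDegree])
  rwa [(Qpoly_monic n z).leadingCoeff, map_one, one_mul] at this

lemma Qpoly_eval (n : ℕ) (z : Fin n → ℂ) (a : ℂ) :
    (Qpoly n z).eval a
      = a ^ n + ∑ k : Fin n, (-1 : ℂ) ^ (k.1 + 1) * z k * a ^ (n - 1 - k.1) := by
  simp [Qpoly, Polynomial.eval_finset_sum]

lemma eval_Ppoly_self {n : ℕ} (w : Fin n → ℂ) (j : Fin n) : (Ppoly w).eval (w j) = 0 := by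
  rw [Ppoly, Polynomial.eval_multiset_prod, Multiset.map_map]
  apply Multiset.prod_eq_zero
  refine Multiset.mem_map.mpr ⟨w j, ?_, by simp⟩
  exact Multiset.mem_map.mpr ⟨j, Finset.mem_val.mpr (Finset.mem_univ j), rfl⟩

lemma norm_le_of_piMap_eq {n : ℕ} (hn : 1 ≤ n) {w z : Fin n → ℂ}
    (h : piMap n w = z) (j : Fin n) :
    ‖w j‖ ≤ max 1 (∑ k, ‖z k‖) := by
  by_contra hc
  push_neg at hc
  have h1 : (1 : ℝ) < ‖w j‖ := lt_of_le_of_lt (le_max_left _ _) hc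
  have hS : (∑ k, ‖z k‖) < ‖w j‖ := lt_of_le_of_lt (le_max_right _ _) hc
  have heval : (Qpoly n z).eval (w j) = 0 := by
    rw [← Ppoly_eq_Qpoly hn h]; exact eval_Ppoly_self w j
  rw [Qpoly_eval] at heval
  have heq : (w j) ^ n = -∑ k : Fin n, (-1 : ℂ) ^ (k.1 + 1) * z k * (w j) ^ (n - 1 - k.1) := by
    linear_combination heval
  have hb : ‖w j‖ ^ n ≤ (∑ k, ‖z k‖) * ‖w j‖ ^ (n - 1) := by
    calc ‖w j‖ ^ n = ‖(w j) ^ n‖ := (norm_pow _ _).symm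
    _ = ‖∑ k : Fin n, (-1 : ℂ) ^ (k.1 + 1) * z k * (w j) ^ (n - 1 - k.1)‖ := by
        rw [heq, norm_neg]
    _ ≤ ∑ k : Fin n, ‖(-1 : ℂ) ^ (k.1 + 1) * z k * (w j) ^ (n - 1 - k.1)‖ := norm_sum_le _ _
    _ ≤ ∑ k : Fin n, ‖z k‖ * ‖w j‖ ^ (n - 1) := by
        apply Finset.sum_le_sum; intro k _
        rw [norm_mul, norm_mul, norm_pow, norm_pow, norm_neg, norm_one, one_pow, one_mul]
        exact mul_le_mul_of_nonneg_left (pow_le_pow_right₀ h1.le (by omega)) (norm_nonneg _)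
    _ = (∑ k, ‖z k‖) * ‖w j‖ ^ (n - 1) := by rw [Finset.sum_mul]
  have hlt : (∑ k, ‖z k‖) * ‖w j‖ ^ (n - 1) < ‖w j‖ * ‖w j‖ ^ (n - 1) :=
    mul_lt_mul_of_pos_right hS (pow_pos (lt_trans one_pos h1) _)
  have hpow : ‖w j‖ * ‖w j‖ ^ (n - 1) = ‖w j‖ ^ n := by
    rw [← pow_succ']
    congr 1
    omega
  linarith

lemma piMap_smul {n : ℕ} (c : ℂ) (w : Fin n → ℂ) (k : Fin n) :
    piMap n (fun j => c * w j) k = c ^ (k.1 + 1) * piMap n w k := by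
  unfold piMap
  rw [Finset.mul_sum]
  apply Finset.sum_congr rfl
  intro s hs
  rw [Finset.prod_mul_distrib, Finset.prod_const, (Finset.mem_powersetCard.mp hs).2]

lemma sum_apply_eq_of_rootMS_eq {n : ℕ} {w w' : Fin n → ℂ} (h : rootMS w = rootMS w')
    (f : ℂ → ℝ) : ∑ j, f (w j) = ∑ j, f (w' j) := by
  have e : ∀ v : Fin n → ℂ, ∑ j, f (v j) = ((rootMS v).map f).sum := by
    intro v
    rw [rootMS, Multiset.map_map]
    rfl
  rw [e, e, h]

/-- The generalized Minkowski functional `μ` of the `(1,2,…,n)`-balanced domain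
`𝔼_{p,n}` satisfies `μ(z) = max{(∑ |w_j|^(2p))^(1/(2p)) : π_n(w) = z}` (the
maximum is attained), and `μ` is continuous. -/
theorem minkowski_functional_symEllipsoid (n : ℕ) (hn : 2 ≤ n) (p : ℝ)
    (hp : 0 < p) (μ : (Fin n → ℂ) → ℝ)
    (hμ : ∀ z : Fin n → ℂ, μ z = sInf {t : ℝ | 0 < t ∧
      (fun k : Fin n => z k / (t : ℂ) ^ (k.1 + 1)) ∈ symEllipsoid p n}) :
    (∀ z : Fin n → ℂ,
      (∃ w : Fin n → ℂ, piMap n w = z ∧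
        μ z = (∑ j, ‖w j‖ ^ (2 * p)) ^ (1 / (2 * p))) ∧
      (∀ w : Fin n → ℂ, piMap n w = z →
        (∑ j, ‖w j‖ ^ (2 * p)) ^ (1 / (2 * p)) ≤ μ z)) ∧
    Continuous μ := by
  have hn1 : 1 ≤ n := le_trans (by norm_num) hn
  have h2p : (0 : ℝ) < 2 * p := by linarith
  have h2p' : (0 : ℝ) < 1 / (2 * p) := by positivity
  choose w₀ hw₀ using fun z : Fin n → ℂ => exists_piMap_eq hn1 z
  set S : (Fin n → ℂ) → ℝ := fun z => ∑ j, ‖w₀ z j‖ ^ (2 * p) with hSdef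
  have hS0 : ∀ z, 0 ≤ S z := fun z =>
    Finset.sum_nonneg fun j _ => Real.rpow_nonneg (norm_nonneg _) _
  have hconst : ∀ (z w : Fin n → ℂ), piMap n w = z → (∑ j, ‖w j‖ ^ (2 * p)) = S z := by
    intro z w hw
    exact sum_apply_eq_of_rootMS_eq
      (rootMS_eq_of_piMap_eq hn1 (by rw [hw, hw₀])) (fun a => ‖a‖ ^ (2 * p))
  have htC : ∀ {t : ℝ}, 0 < t → ((t : ℂ)) ≠ 0 := by
    intro t ht; exact_mod_cast ht.ne'
  have hnormt : ∀ {t : ℝ}, 0 < t → ‖(t : ℂ)‖ = t := by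
    intro t ht; rw [Complex.norm_real, Real.norm_eq_abs, abs_of_pos ht]
  have hμN : ∀ z, μ z = (S z) ^ (1 / (2 * p)) := by
    intro z
    rw [hμ]
    have hset : {t : ℝ | 0 < t ∧ (fun k : Fin n => z k / (t : ℂ) ^ (k.1 + 1)) ∈ symEllipsoid p n}
        = Set.Ioi ((S z) ^ (1 / (2 * p))) := by
      ext t
      simp only [Set.mem_setOf_eq, Set.mem_Ioi, symEllipsoid, Set.mem_image, ellipsoid]
      constructor
      · rintro ⟨ht, u, hu, hup⟩
        have hw : piMap n (fun j => (t : ℂ) * u j) = z := by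
          funext k
          rw [piMap_smul, congrFun hup k]
          field_simp
          rw [mul_comm, mul_div_assoc, div_self (pow_ne_zero _ (htC ht)), mul_one]
        have hsum : S z = t ^ (2 * p) * ∑ j, ‖u j‖ ^ (2 * p) := by
          rw [← hconst z _ hw, Finset.mul_sum]
          apply Finset.sum_congr rfl
          intro j _
          rw [norm_mul, Real.mul_rpow (norm_nonneg _) (norm_nonneg _), hnormt ht]
        have hlt : S z < t ^ (2 * p) := by
          calc S z = t ^ (2 * p) * ∑ j, ‖u j‖ ^ (2 * p) := hsum
          _ < t ^ (2 * p) * 1 := mul_lt_mul_of_pos_left hu (Real.rpow_pos_of_pos ht _)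
          _ = t ^ (2 * p) := mul_one _
        have := Real.rpow_lt_rpow (hS0 z) hlt h2p'
        rwa [← Real.rpow_mul ht.le, mul_one_div_cancel h2p.ne', Real.rpow_one] at this
      · intro htN
        have hN0 : 0 ≤ (S z) ^ (1 / (2 * p)) := Real.rpow_nonneg (hS0 z) _
        have ht : 0 < t := lt_of_le_of_lt hN0 htN
        have hSz : S z < t ^ (2 * p) := by
          have := Real.rpow_lt_rpow hN0 htN h2p
          rwa [← Real.rpow_mul (hS0 z), one_div_mul_cancel h2p.ne', Real.rpow_one] at this
        refine ⟨ht, fun j => (t : ℂ)⁻¹ * w₀ z j, ?_, ?_⟩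
        · show (∑ j, ‖(t : ℂ)⁻¹ * w₀ z j‖ ^ (2 * p)) < 1
          have he : (∑ j, ‖(t : ℂ)⁻¹ * w₀ z j‖ ^ (2 * p)) = t⁻¹ ^ (2 * p) * S z := by
            rw [hSdef, Finset.mul_sum]
            apply Finset.sum_congr rfl
            intro j _
            rw [norm_mul, Real.mul_rpow (norm_nonneg _) (norm_nonneg _), norm_inv, hnormt ht]
          rw [he]
          calc t⁻¹ ^ (2 * p) * S z < t⁻¹ ^ (2 * p) * t ^ (2 * p) :=
                mul_lt_mul_of_pos_left hSz (Real.rpow_pos_of_pos (inv_pos.mpr ht) _)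
          _ = 1 := by
              rw [← Real.mul_rpow (inv_nonneg.mpr ht.le) ht.le, inv_mul_cancel₀ ht.ne',
                Real.one_rpow]
        · funext k
          rw [piMap_smul, hw₀]
          rw [div_eq_mul_inv, ← inv_pow, mul_comm]
    rw [hset]
    exact csInf_Ioi
  refine ⟨fun z => ⟨⟨w₀ z, hw₀ z, ?_⟩, ?_⟩, ?_⟩
  · rw [hμN z, hSdef]
  · intro w hwz
    rw [hμN z, ← hconst z w hwz]
  · have hμeq : μ = fun z => (S z) ^ (1 / (2 * p)) := funext hμN
    rw [hμeq]
    have hFcont : Continuous (fun v : Fin n → ℂ => ∑ j, ‖v j‖ ^ (2 * p)) := by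
      apply continuous_finset_sum
      intro j _
      exact ((continuous_apply j).norm).rpow_const (fun _ => Or.inr h2p.le)
    have hπcont : Continuous (piMap n) := by
      apply continuous_pi
      intro k
      apply continuous_finset_sum
      intro s _
      exact continuous_finset_prod _ (fun j _ => continuous_apply j)
    refine Continuous.rpow_const ?_ (fun _ => Or.inr h2p'.le)
    rw [continuous_iff_seqContinuous]
    intro x z hx
    apply Filter.tendsto_of_subseq_tendsto
    intro ns hns
    have hgcont : Continuous (fun v : Fin n → ℂ => max 1 (∑ k, ‖v k‖)) :=
      continuous_const.max (continuous_finset_sum _ fun k _ => (continuous_apply k).norm)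
    obtain ⟨C, hC⟩ := ((hgcont.tendsto z).comp hx).bddAbove_range
    have hC' : ∀ m, max 1 (∑ k, ‖x m k‖) ≤ C := fun m => hC (Set.mem_range_self m)
    have hC0 : 0 ≤ C := le_trans (le_trans zero_le_one (le_max_left _ _)) (hC' 0)
    set wseq : ℕ → (Fin n → ℂ) := fun m => w₀ (x (ns m)) with hwseq
    have hmem : ∀ m, wseq m ∈ Metric.closedBall (0 : Fin n → ℂ) C := by
      intro m
      rw [Metric.mem_closedBall, dist_zero_right, pi_norm_le_iff_of_nonneg hC0]
      intro j
      exact le_trans (norm_le_of_piMap_eq hn1 (hw₀ (x (ns m))) j) (hC' (ns m))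
    obtain ⟨w', -, φ, hφ, hconv⟩ :=
      (isCompact_closedBall (0 : Fin n → ℂ) C).tendsto_subseq hmem
    refine ⟨φ, ?_⟩
    have hx' : Filter.Tendsto (fun i => x (ns (φ i))) Filter.atTop (nhds z) :=
      hx.comp (hns.comp hφ.tendsto_atTop)
    have hπw' : piMap n w' = z := by
      have t1 : Filter.Tendsto (fun i => piMap n (wseq (φ i))) Filter.atTop
          (nhds (piMap n w')) := (hπcont.tendsto w').comp hconv
      have t2 : (fun i => piMap n (wseq (φ i))) = fun i => x (ns (φ i)) := by
        funext i; exact hw₀ _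
      rw [t2] at t1
      exact tendsto_nhds_unique t1 hx'
    have t3 : Filter.Tendsto (fun i => ∑ j, ‖wseq (φ i) j‖ ^ (2 * p)) Filter.atTop
        (nhds (∑ j, ‖w' j‖ ^ (2 * p))) := (hFcont.tendsto w').comp hconv
    rw [hconst z w' hπw'] at t3
    exact t3
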